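/- The Matsumoto–Tits section is well-defined: for s ∈ S_n, the element σ_{i₁}⋯σ_{i_ℓ} of the positive braid monoid B_n⁺ does not depend on the choice of reduced expression s = s_{i₁}⋯s_{i_ℓ}. -/

import Mathlib

/-- `σ` is a simple transposition `s_i = (i, i+1)` of `S_n`. -/
def IsSimpleT {n : ℕ} (σ : Equiv.Perm (Fin n)) : Prop :=
  ∃ i : ℕ, ∃ h : i + 1 < n, σ = Equiv.swap ⟨i, by omega⟩ ⟨i + 1, h⟩

/-- The Coxeter length of `σ ∈ S_n`. -/
noncomputable def permLength {n : ℕ} (σ : Equiv.Perm (Fin n)) : ℕ :=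
  sInf {m | ∃ w : List (Equiv.Perm (Fin n)),
    (∀ x ∈ w, IsSimpleT x) ∧ w.prod = σ ∧ w.length = m}

/-- The `i`-th simple transposition of `S_n`, for `i : Fin (n-1)` (0-based). -/
def simpleT (n : ℕ) (i : Fin (n - 1)) : Equiv.Perm (Fin n) :=
  Equiv.swap ⟨(i : ℕ), by have := i.isLt; omega⟩ ⟨(i : ℕ) + 1, by have := i.isLt; omega⟩

/-- The monoid homomorphism sending a word in the generators `σ_1,…,σ_{n-1}` to the
corresponding product of simple transpositions of `S_n`. -/
def wordPerm (n : ℕ) : FreeMonoid (Fin (n - 1)) →* Equiv.Perm (Fin n) :=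
  FreeMonoid.lift (simpleT n)

/-- The braid relations on words in the generators `σ_1,…,σ_{n-1}`:
`σ_i σ_j = σ_j σ_i` for `|i-j| > 1`, and `σ_i σ_{i+1} σ_i = σ_{i+1} σ_i σ_{i+1}`. -/
def braidRel (n : ℕ) : FreeMonoid (Fin (n - 1)) → FreeMonoid (Fin (n - 1)) → Prop :=
  fun x y =>
    (∃ i j : Fin (n - 1), (i : ℕ) + 1 < (j : ℕ) ∧
      x = FreeMonoid.of i * FreeMonoid.of j ∧ y = FreeMonoid.of j * FreeMonoid.of i) ∨
    (∃ i j : Fin (n - 1), (j : ℕ) = (i : ℕ) + 1 ∧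
      x = FreeMonoid.of i * FreeMonoid.of j * FreeMonoid.of i ∧
      y = FreeMonoid.of j * FreeMonoid.of i * FreeMonoid.of j)

/-- The congruence on the free monoid generated by the braid relations; the quotient
`(braidCon n).Quotient` is the positive braid monoid `B_n⁺`. -/
def braidCon (n : ℕ) : Con (FreeMonoid (Fin (n - 1))) := conGen (braidRel n)

namespace Mats
variable {n : ℕ}

def lo (i : Fin (n - 1)) : Fin n := ⟨(i : ℕ), by have := i.isLt; omega⟩
def hi (i : Fin (n - 1)) : Fin n := ⟨(i : ℕ) + 1, by have := i.isLt; omega⟩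

lemma simpleT_eq (i : Fin (n-1)) : simpleT n i = Equiv.swap (lo i) (hi i) := rfl

lemma lo_lt_hi (i : Fin (n-1)) : lo i < hi i := by simp [lo, hi, Fin.lt_def]

lemma swap_adj_lt (i : Fin (n-1)) {x y : Fin n} (hxy : x < y)
    (hne : ¬(x = lo i ∧ y = hi i)) :
    simpleT n i x < simpleT n i y := by
  simp only [not_and, Fin.ext_iff, lo, hi] at hne
  simp only [simpleT_eq, Equiv.swap_apply_def, lo, hi]
  split_ifs <;> (simp only [Fin.lt_def, Fin.ext_iff, Fin.val_mk] at *) <;> omega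

def invSet (s : Equiv.Perm (Fin n)) : Finset (Fin n × Fin n) :=
  Finset.univ.filter fun p => p.1 < p.2 ∧ s p.2 < s p.1

noncomputable def cinv (s : Equiv.Perm (Fin n)) : ℕ := (invSet s).card

lemma simpleT_lo (i : Fin (n-1)) : simpleT n i (lo i) = hi i := by
  simp [simpleT_eq, Equiv.swap_apply_left]
lemma simpleT_hi (i : Fin (n-1)) : simpleT n i (hi i) = lo i := by
  simp [simpleT_eq]
lemma simpleT_mul_self (i : Fin (n-1)) : simpleT n i * simpleT n i = 1 := by
  simp [simpleT_eq, Equiv.swap_mul_self]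
lemma simpleT_inv (i : Fin (n-1)) : (simpleT n i)⁻¹ = simpleT n i := by
  simp [simpleT_eq]

lemma erase_card_eq (s : Equiv.Perm (Fin n)) (i : Fin (n-1)) :
    ((invSet (s * simpleT n i)).erase (lo i, hi i)).card
      = ((invSet s).erase (lo i, hi i)).card := by
  apply Finset.card_bij' (fun p _ => (simpleT n i p.1, simpleT n i p.2))
    (fun p _ => (simpleT n i p.1, simpleT n i p.2))
  · rintro ⟨x, y⟩ hp
    simp only [Finset.mem_erase, invSet, Finset.mem_filter, Finset.mem_univ, true_and,
      Equiv.Perm.mul_apply, Prod.mk.injEq, ne_eq] at hp ⊢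
    obtain ⟨hne, hxy, hinv⟩ : ¬_ ∧ _ ∧ _ := ⟨hp.1, (Finset.mem_filter.1 hp.2).2⟩
    have hord : simpleT n i x < simpleT n i y := by
      apply swap_adj_lt i hxy
      rintro ⟨rfl, rfl⟩; exact hne ⟨rfl, rfl⟩
    refine ⟨?_, hord, ?_⟩
    · rintro ⟨h1, h2⟩
      have hx : x = hi i := by
        have := congrArg (simpleT n i) h1
        rw [← Equiv.Perm.mul_apply, simpleT_mul_self, simpleT_lo] at this; simpa using this
      have hy : y = lo i := by
        have := congrArg (simpleT n i) h2
        rw [← Equiv.Perm.mul_apply, simpleT_mul_self, simpleT_hi] at this; simpa using this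
      subst hx; subst hy
      exact absurd hxy (by simp [Fin.lt_def, lo, hi])
    · exact hinv
  · rintro ⟨x, y⟩ hp
    simp only [Finset.mem_erase, invSet, Finset.mem_filter, Finset.mem_univ, true_and,
      Equiv.Perm.mul_apply, Prod.mk.injEq, ne_eq] at hp ⊢
    obtain ⟨hne, hxy, hinv⟩ := hp
    have hord : simpleT n i x < simpleT n i y := by
      apply swap_adj_lt i hxy
      rintro ⟨rfl, rfl⟩; exact hne ⟨rfl, rfl⟩
    refine ⟨?_, Finset.mem_filter.2 ⟨Finset.mem_univ _, hord, ?_⟩⟩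
    · rintro ⟨h1, h2⟩
      have hx : x = hi i := by
        have := congrArg (simpleT n i) h1
        rw [← Equiv.Perm.mul_apply, simpleT_mul_self, simpleT_lo] at this; simpa using this
      have hy : y = lo i := by
        have := congrArg (simpleT n i) h2
        rw [← Equiv.Perm.mul_apply, simpleT_mul_self, simpleT_hi] at this; simpa using this
      subst hx; subst hy
      exact absurd hxy (by simp [Fin.lt_def, lo, hi])
    · have h2 : simpleT n i (simpleT n i y) = y := by
        rw [← Equiv.Perm.mul_apply, simpleT_mul_self]; rfl
      have h1 : simpleT n i (simpleT n i x) = x := by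
        rw [← Equiv.Perm.mul_apply, simpleT_mul_self]; rfl
      rw [h1, h2]; exact hinv
  · rintro ⟨x, y⟩ _
    simp [← Equiv.Perm.mul_apply, simpleT_mul_self]
  · rintro ⟨x, y⟩ _
    simp [← Equiv.Perm.mul_apply, simpleT_mul_self]

end Mats

namespace Mats
variable {n : ℕ}

lemma pair_mem_invSet (s : Equiv.Perm (Fin n)) (i : Fin (n-1)) :
    (lo i, hi i) ∈ invSet s ↔ s (hi i) < s (lo i) := by
  simp [invSet, lo_lt_hi]

lemma mul_lo (s : Equiv.Perm (Fin n)) (i : Fin (n-1)) :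
    (s * simpleT n i) (lo i) = s (hi i) := by
  simp [Equiv.Perm.mul_apply, simpleT_lo]

lemma mul_hi (s : Equiv.Perm (Fin n)) (i : Fin (n-1)) :
    (s * simpleT n i) (hi i) = s (lo i) := by
  simp [Equiv.Perm.mul_apply, simpleT_hi]

lemma cinv_mul_of_lt {s : Equiv.Perm (Fin n)} {i : Fin (n-1)} (h : s (lo i) < s (hi i)) :
    cinv (s * simpleT n i) = cinv s + 1 := by
  have h1 : (lo i, hi i) ∈ invSet (s * simpleT n i) := by
    rw [pair_mem_invSet, mul_lo, mul_hi]; exact h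
  have h2 : (lo i, hi i) ∉ invSet s := by
    rw [pair_mem_invSet]; exact not_lt.2 h.le
  have e1 := erase_card_eq s i
  rw [Finset.erase_eq_of_notMem h2] at e1
  unfold cinv
  rw [← Finset.card_erase_add_one h1, e1]

lemma cinv_mul_of_gt {s : Equiv.Perm (Fin n)} {i : Fin (n-1)} (h : s (hi i) < s (lo i)) :
    cinv (s * simpleT n i) + 1 = cinv s := by
  have := cinv_mul_of_lt (s := s * simpleT n i) (i := i) (by rwa [mul_lo, mul_hi])
  rw [mul_assoc, simpleT_mul_self, mul_one] at this
  omega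

lemma cinv_mul_le (s : Equiv.Perm (Fin n)) (i : Fin (n-1)) :
    cinv (s * simpleT n i) ≤ cinv s + 1 := by
  rcases lt_trichotomy (s (lo i)) (s (hi i)) with h | h | h
  · exact (cinv_mul_of_lt h).le
  · exact absurd (s.injective h) (by simp [lo, hi, Fin.ext_iff])
  · have := cinv_mul_of_gt h; omega

lemma cinv_mul_le' (s : Equiv.Perm (Fin n)) (i : Fin (n-1)) :
    cinv (s * simpleT n i) ≤ cinv s + 1 ∧ cinv s ≤ cinv (s * simpleT n i) + 1 := by
  rcases lt_trichotomy (s (lo i)) (s (hi i)) with h | h | h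
  · have := cinv_mul_of_lt h; omega
  · exact absurd (s.injective h) (by simp [lo, hi, Fin.ext_iff])
  · have := cinv_mul_of_gt h; omega

lemma cinv_inv (s : Equiv.Perm (Fin n)) : cinv s⁻¹ = cinv s := by
  unfold cinv
  apply Finset.card_bij' (fun p _ => (s⁻¹ p.2, s⁻¹ p.1)) (fun p _ => (s p.2, s p.1))
  · rintro ⟨x, y⟩ hp
    simp only [invSet, Finset.mem_filter, Finset.mem_univ, true_and] at hp ⊢
    exact ⟨hp.2, by simpa using hp.1⟩
  · rintro ⟨x, y⟩ hp
    simp only [invSet, Finset.mem_filter, Finset.mem_univ, true_and] at hp ⊢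
    exact ⟨hp.2, by simpa using hp.1⟩
  · rintro ⟨x, y⟩ _; simp
  · rintro ⟨x, y⟩ _; simp

lemma cinv_simpleT_mul_of_lt {s : Equiv.Perm (Fin n)} {i : Fin (n-1)}
    (h : s⁻¹ (lo i) < s⁻¹ (hi i)) :
    cinv (simpleT n i * s) = cinv s + 1 := by
  have : cinv (s⁻¹ * simpleT n i) = cinv s⁻¹ + 1 := cinv_mul_of_lt (by simpa using h)
  rw [← cinv_inv (simpleT n i * s), mul_inv_rev, simpleT_inv, cinv_inv s] at *
  exact this

lemma cinv_simpleT_mul_of_gt {s : Equiv.Perm (Fin n)} {i : Fin (n-1)}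
    (h : s⁻¹ (hi i) < s⁻¹ (lo i)) :
    cinv (simpleT n i * s) + 1 = cinv s := by
  have : cinv (s⁻¹ * simpleT n i) + 1 = cinv s⁻¹ := cinv_mul_of_gt (by simpa using h)
  rw [← cinv_inv (simpleT n i * s), mul_inv_rev, simpleT_inv, cinv_inv s] at *
  exact this

end Mats

namespace Mats
variable {n : ℕ}

lemma wordPerm_of (i : Fin (n-1)) : wordPerm n (FreeMonoid.of i) = simpleT n i :=
  FreeMonoid.lift_eval_of _ _

lemma of_mul_eq_cons (i : Fin (n-1)) (w : FreeMonoid (Fin (n-1))) :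
    FreeMonoid.of i * w = (i :: w : List (Fin (n-1))) := rfl

lemma wordPerm_cons (i : Fin (n-1)) (w : FreeMonoid (Fin (n-1))) :
    wordPerm n ((i :: w : List (Fin (n-1)))) = simpleT n i * wordPerm n w := by
  rw [← of_mul_eq_cons, map_mul, wordPerm_of]

lemma cinv_one : cinv (1 : Equiv.Perm (Fin n)) = 0 := by
  unfold cinv invSet
  rw [Finset.card_eq_zero, Finset.filter_eq_empty_iff]
  rintro ⟨x, y⟩ _
  simp only [Equiv.Perm.one_apply, not_and]
  exact fun h => not_lt.2 h.le

lemma cinv_simpleT_mul_le' (s : Equiv.Perm (Fin n)) (i : Fin (n-1)) :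
    cinv (simpleT n i * s) ≤ cinv s + 1 ∧ cinv s ≤ cinv (simpleT n i * s) + 1 := by
  rcases lt_trichotomy (s⁻¹ (lo i)) (s⁻¹ (hi i)) with h | h | h
  · have := cinv_simpleT_mul_of_lt h; omega
  · exact absurd (s⁻¹.injective h) (by simp [lo, hi, Fin.ext_iff])
  · have := cinv_simpleT_mul_of_gt h; omega

open FreeMonoid in
lemma cinv_wp_le (l : List (Fin (n-1))) :
    cinv (wordPerm n (FreeMonoid.ofList l)) ≤ l.length := by
  induction l with
  | nil => simp [FreeMonoid.ofList_nil, cinv_one]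
  | cons i t ih =>
    rw [FreeMonoid.ofList_cons, map_mul, wordPerm_of]
    have := cinv_simpleT_mul_le' (wordPerm n (FreeMonoid.ofList t)) i
    simpa using by omega

lemma perm_eq_one_of_no_descent (s : Equiv.Perm (Fin n))
    (hd : ∀ i : Fin (n-1), ¬ s (hi i) < s (lo i)) : s = 1 := by
  match n, s, hd with
  | 0, s, hd => exact Subsingleton.elim s 1
  | (m+1), s, hd =>
    have hsm : StrictMono (s : Fin (m+1) → Fin (m+1)) := by
      rw [Fin.strictMono_iff_lt_succ]
      intro i
      have h1 := hd i
      have hlo : lo (n := m+1) i = Fin.castSucc i := rfl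
      have hhi : hi (n := m+1) i = Fin.succ i := rfl
      rw [hlo, hhi] at h1
      rcases lt_or_eq_of_le (not_lt.1 h1) with h | h
      · exact h
      · exact absurd (s.injective h) (by simp [Fin.ext_iff])
    haveI : WellFoundedLT (Fin (m+1)) := Finite.to_wellFoundedLT
    have hid : (s : Fin (m+1) → Fin (m+1)) = id :=
      (hsm.range_inj strictMono_id).1 (by rw [s.surjective.range_eq, Set.range_id])
    exact Equiv.ext fun x => congrFun hid x

lemma exists_word (s : Equiv.Perm (Fin n)) :
    ∃ l : List (Fin (n-1)), wordPerm n (FreeMonoid.ofList l) = s ∧ l.length = cinv s := by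
  generalize h : cinv s = N
  induction N using Nat.strong_induction_on generalizing s with
  | _ N IH =>
  by_cases hd : ∃ i : Fin (n-1), s (hi i) < s (lo i)
  · obtain ⟨i, hdi⟩ := hd
    have h2 : cinv (s * simpleT n i) + 1 = cinv s := cinv_mul_of_gt hdi
    obtain ⟨l, hl1, hl2⟩ := IH (cinv (s * simpleT n i)) (by omega) (s * simpleT n i) rfl
    refine ⟨l ++ [i], ?_, ?_⟩
    · rw [FreeMonoid.ofList_append, map_mul, hl1, FreeMonoid.ofList_singleton, wordPerm_of,
        mul_assoc, simpleT_mul_self, mul_one]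
    · simp only [List.length_append, List.length_singleton]; omega
  · push_neg at hd
    have hs1 : s = 1 := perm_eq_one_of_no_descent s fun i => not_lt.2 (hd i)
    subst hs1
    exact ⟨[], by simp [FreeMonoid.ofList_nil], by rw [cinv_one] at h; simp [← h]⟩

lemma isSimpleT_simpleT (i : Fin (n-1)) : IsSimpleT (simpleT n i) :=
  ⟨(i : ℕ), by have := i.isLt; omega, rfl⟩

lemma wp_eq_prod_map (l : List (Fin (n-1))) :
    wordPerm n (FreeMonoid.ofList l) = (l.map (simpleT n)).prod :=
  FreeMonoid.lift_ofList _ _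

lemma permlist_to_word (L : List (Equiv.Perm (Fin n))) (hL : ∀ x ∈ L, IsSimpleT x) :
    ∃ l : List (Fin (n-1)), wordPerm n (FreeMonoid.ofList l) = L.prod ∧ l.length = L.length := by
  induction L with
  | nil => exact ⟨[], by simp [FreeMonoid.ofList_nil], rfl⟩
  | cons σ t ih =>
    obtain ⟨l, hl1, hl2⟩ := ih fun x hx => hL x (List.mem_cons_of_mem _ hx)
    obtain ⟨i, hlt, hσ⟩ := hL σ List.mem_cons_self
    refine ⟨⟨i, by omega⟩ :: l, ?_, by simp [hl2]⟩
    rw [FreeMonoid.ofList_cons, map_mul, wordPerm_of, hl1, List.prod_cons]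
    congr 1
    rw [hσ]
    rfl

lemma permLength_eq_cinv (s : Equiv.Perm (Fin n)) : permLength s = cinv s := by
  obtain ⟨l, hl1, hl2⟩ := exists_word s
  have hmem : cinv s ∈ {m | ∃ w : List (Equiv.Perm (Fin n)),
      (∀ x ∈ w, IsSimpleT x) ∧ w.prod = s ∧ w.length = m} := by
    refine ⟨l.map (simpleT n), ?_, ?_, by simp [hl2]⟩
    · intro x hx
      obtain ⟨i, _, rfl⟩ := List.mem_map.1 hx
      exact isSimpleT_simpleT i
    · rw [← wp_eq_prod_map, hl1]
  apply le_antisymm (Nat.sInf_le hmem)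
  apply le_csInf ⟨_, hmem⟩
  rintro m ⟨L, hall, hprod, hlen⟩
  obtain ⟨l', hl'1, hl'2⟩ := permlist_to_word L hall
  calc cinv s = cinv (wordPerm n (FreeMonoid.ofList l')) := by rw [hl'1, hprod]
    _ ≤ l'.length := cinv_wp_le l'
    _ = m := by rw [hl'2, hlen]

lemma simpleT_apply_of_ne (i : Fin (n-1)) (x : Fin n) (h1 : (x:ℕ) ≠ i) (h2 : (x:ℕ) ≠ (i:ℕ)+1) :
    simpleT n i x = x := by
  rw [simpleT_eq]
  exact Equiv.swap_apply_of_ne_of_ne (by simp [lo, Fin.ext_iff, h1]) (by simp [hi, Fin.ext_iff, h2])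

lemma perm_comm {i j : Fin (n-1)} (h : (i:ℕ)+1 < j ∨ (j:ℕ)+1 < i) :
    simpleT n i * simpleT n j = simpleT n j * simpleT n i := by
  ext x
  simp only [Equiv.Perm.mul_apply, simpleT_eq, Equiv.swap_apply_def, lo, hi]
  split_ifs <;> (simp only [Fin.lt_def, Fin.ext_iff, Fin.val_mk] at *) <;> omega

lemma perm_braid {i j : Fin (n-1)} (h : (j:ℕ) = (i:ℕ)+1) :
    simpleT n i * simpleT n j * simpleT n i = simpleT n j * simpleT n i * simpleT n j := by
  have hlojhii : lo j = hi i := by simp [lo, hi, Fin.ext_iff, h]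
  have hab : lo i ≠ hi i := by simp [lo, hi, Fin.ext_iff]
  have hac : lo i ≠ hi j := by simp [lo, hi, Fin.ext_iff]; omega
  have hcb : hi j ≠ hi i := by simp [hi, Fin.ext_iff]; omega
  have hca : hi j ≠ lo i := Ne.symm hac
  have h1 : simpleT n j * simpleT n i * simpleT n j
      = Equiv.swap (hi j) (lo i) := by
    rw [simpleT_eq, simpleT_eq, hlojhii]
    exact Equiv.swap_mul_swap_mul_swap hab hac
  have h2 : simpleT n i * simpleT n j * simpleT n i
      = Equiv.swap (lo i) (hi j) := by
    rw [simpleT_eq, simpleT_eq, hlojhii, Equiv.swap_comm (lo i) (hi i),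
      Equiv.swap_comm (hi i) (hi j)]
    exact Equiv.swap_mul_swap_mul_swap hcb hca
  rw [h1, h2, Equiv.swap_comm]

/-- left descent: `cinv (σᵢ * s) + 1 = cinv s` from strict descent info. -/
lemma ldesc_iff {s : Equiv.Perm (Fin n)} {i : Fin (n-1)} (h : cinv (simpleT n i * s) < cinv s) :
    s⁻¹ (hi i) < s⁻¹ (lo i) := by
  rcases lt_trichotomy (s⁻¹ (lo i)) (s⁻¹ (hi i)) with h' | h' | h'
  · have := cinv_simpleT_mul_of_lt h'; omega
  · exact absurd (s⁻¹.injective h') (by simp [lo, hi, Fin.ext_iff])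
  · exact h'

lemma factor_comm {s : Equiv.Perm (Fin n)} {i j : Fin (n-1)}
    (hij : (i:ℕ)+1 < j ∨ (j:ℕ)+1 < i)
    (hi' : s⁻¹ (hi i) < s⁻¹ (lo i)) (hj' : s⁻¹ (hi j) < s⁻¹ (lo j)) :
    ∃ t, s = simpleT n i * (simpleT n j * t) ∧ cinv t + 2 = cinv s := by
  have hd1 : cinv (simpleT n i * s) + 1 = cinv s := cinv_simpleT_mul_of_gt hi'
  have key : ∀ x : Fin n, simpleT n i x = x → True := fun _ _ => trivial
  have hfix_lo : simpleT n i (lo j) = lo j := by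
    apply simpleT_apply_of_ne <;> simp [lo] <;> omega
  have hfix_hi : simpleT n i (hi j) = hi j := by
    apply simpleT_apply_of_ne <;> simp [hi] <;> omega
  have hd2 : cinv (simpleT n j * (simpleT n i * s)) + 1 = cinv (simpleT n i * s) := by
    apply cinv_simpleT_mul_of_gt
    have e : (simpleT n i * s)⁻¹ = s⁻¹ * simpleT n i := by
      rw [mul_inv_rev, simpleT_inv]
    rw [e]
    simpa [Equiv.Perm.mul_apply, hfix_lo, hfix_hi] using hj'
  refine ⟨simpleT n j * (simpleT n i * s), ?_, by omega⟩
  rw [← mul_assoc, ← mul_assoc, ← mul_assoc]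
  rw [show simpleT n i * simpleT n j * simpleT n j * simpleT n i =
    simpleT n i * (simpleT n j * simpleT n j) * simpleT n i by group]
  rw [simpleT_mul_self, mul_one, simpleT_mul_self, one_mul]

lemma factor_adj {s : Equiv.Perm (Fin n)} {i j : Fin (n-1)}
    (hij : (j:ℕ) = (i:ℕ)+1)
    (hi' : s⁻¹ (hi i) < s⁻¹ (lo i)) (hj' : s⁻¹ (hi j) < s⁻¹ (lo j)) :
    ∃ t, s = simpleT n i * (simpleT n j * (simpleT n i * t)) ∧ cinv t + 3 = cinv s := by
  have hlojhii : lo j = hi i := by simp [lo, hi, Fin.ext_iff, hij]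
  have hd1 : cinv (simpleT n i * s) + 1 = cinv s := cinv_simpleT_mul_of_gt hi'
  -- s1 = σᵢ s
  have e1 : (simpleT n i * s)⁻¹ = s⁻¹ * simpleT n i := by
    rw [mul_inv_rev, simpleT_inv]
  have hd2 : cinv (simpleT n j * (simpleT n i * s)) + 1 = cinv (simpleT n i * s) := by
    apply cinv_simpleT_mul_of_gt
    rw [e1]
    have h1 : simpleT n i (lo j) = lo i := by rw [hlojhii, simpleT_hi]
    have h2 : simpleT n i (hi j) = hi j := by
      apply simpleT_apply_of_ne <;> simp [hi] <;> omega
    simp only [Equiv.Perm.mul_apply, h1, h2]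
    rw [hlojhii] at hj'
    exact lt_trans hj' hi'
  have e2 : (simpleT n j * (simpleT n i * s))⁻¹ = s⁻¹ * simpleT n i * simpleT n j := by
    rw [mul_inv_rev, mul_inv_rev, simpleT_inv, simpleT_inv, mul_assoc]
  have hd3 : cinv (simpleT n i * (simpleT n j * (simpleT n i * s))) + 1
      = cinv (simpleT n j * (simpleT n i * s)) := by
    apply cinv_simpleT_mul_of_gt
    rw [e2]
    have h1 : simpleT n j (lo i) = lo i := by
      apply simpleT_apply_of_ne <;> simp [lo] <;> omega
    have h2 : simpleT n j (hi i) = hi j := by rw [← hlojhii, simpleT_lo]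
    have h3 : simpleT n i (lo i) = hi i := simpleT_lo i
    have h4 : simpleT n i (hi j) = hi j := by
      apply simpleT_apply_of_ne <;> simp [hi] <;> omega
    simp only [Equiv.Perm.mul_apply, h1, h2, h3, h4]
    rw [hlojhii] at hj'
    exact hj'
  refine ⟨simpleT n i * (simpleT n j * (simpleT n i * s)), ?_, by omega⟩
  have : ∀ u : Equiv.Perm (Fin n), simpleT n i * (simpleT n i * u) = u := by
    intro u; rw [← mul_assoc, simpleT_mul_self, one_mul]
  have hj2 : ∀ u : Equiv.Perm (Fin n), simpleT n j * (simpleT n j * u) = u := by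
    intro u; rw [← mul_assoc, simpleT_mul_self, one_mul]
  rw [this, hj2, this]

noncomputable abbrev mkw (l : List (Fin (n-1))) : (braidCon n).Quotient :=
  (braidCon n).mk' (FreeMonoid.ofList l)

lemma mkw_cons (i : Fin (n-1)) (l : List (Fin (n-1))) :
    mkw (i::l) = (braidCon n).mk' (FreeMonoid.of i) * mkw l := by
  rw [mkw, FreeMonoid.ofList_cons, map_mul]

lemma braid_step_comm {i j : Fin (n-1)} (h : (i:ℕ)+1 < j ∨ (j:ℕ)+1 < i)
    (l : List (Fin (n-1))) : mkw (i::j::l) = mkw (j::i::l) := by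
  have hrel : (braidCon n) (FreeMonoid.of i * FreeMonoid.of j)
      (FreeMonoid.of j * FreeMonoid.of i) := by
    rcases h with h | h
    · exact ConGen.Rel.of _ _ (Or.inl ⟨i, j, h, rfl, rfl⟩)
    · exact ((conGen (braidRel n)).symm (ConGen.Rel.of _ _ (Or.inl ⟨j, i, h, rfl, rfl⟩)))
  have : (braidCon n).mk' (FreeMonoid.of i * FreeMonoid.of j)
      = (braidCon n).mk' (FreeMonoid.of j * FreeMonoid.of i) := (Con.eq _).2 hrel
  have e1 : FreeMonoid.ofList (i::j::l)
      = FreeMonoid.of i * FreeMonoid.of j * FreeMonoid.ofList l := by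
    simp [FreeMonoid.ofList_cons, mul_assoc]
  have e2 : FreeMonoid.ofList (j::i::l)
      = FreeMonoid.of j * FreeMonoid.of i * FreeMonoid.ofList l := by
    simp [FreeMonoid.ofList_cons, mul_assoc]
  rw [mkw, mkw, e1, e2]
  exact (Con.eq _).2 ((braidCon n).mul hrel ((braidCon n).refl _))

lemma braid_step_adj {i j : Fin (n-1)} (h : (j:ℕ) = (i:ℕ)+1 ∨ (i:ℕ) = (j:ℕ)+1)
    (l : List (Fin (n-1))) : mkw (i::j::i::l) = mkw (j::i::j::l) := by
  have hrel : (braidCon n) (FreeMonoid.of i * FreeMonoid.of j * FreeMonoid.of i)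
      (FreeMonoid.of j * FreeMonoid.of i * FreeMonoid.of j) := by
    rcases h with h | h
    · exact ConGen.Rel.of _ _ (Or.inr ⟨i, j, h, rfl, rfl⟩)
    · exact ((conGen (braidRel n)).symm (ConGen.Rel.of _ _ (Or.inr ⟨j, i, h, rfl, rfl⟩)))
  have key : (braidCon n).mk' (FreeMonoid.of i * FreeMonoid.of j * FreeMonoid.of i)
      = (braidCon n).mk' (FreeMonoid.of j * FreeMonoid.of i * FreeMonoid.of j) :=
    (Con.eq _).2 hrel
  have e1 : FreeMonoid.ofList (i::j::i::l)
      = FreeMonoid.of i * FreeMonoid.of j * FreeMonoid.of i * FreeMonoid.ofList l := by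
    simp [FreeMonoid.ofList_cons, mul_assoc]
  have e2 : FreeMonoid.ofList (j::i::j::l)
      = FreeMonoid.of j * FreeMonoid.of i * FreeMonoid.of j * FreeMonoid.ofList l := by
    simp [FreeMonoid.ofList_cons, mul_assoc]
  rw [mkw, mkw, e1, e2]
  exact (Con.eq _).2 ((braidCon n).mul hrel ((braidCon n).refl _))

lemma wp_cons (i : Fin (n-1)) (l : List (Fin (n-1))) :
    wordPerm n (FreeMonoid.ofList (i::l)) = simpleT n i * wordPerm n (FreeMonoid.ofList l) := by
  rw [FreeMonoid.ofList_cons, map_mul, wordPerm_of]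

theorem main_lists : ∀ N (s : Equiv.Perm (Fin n)) (l₁ l₂ : List (Fin (n-1))),
    cinv s = N →
    wordPerm n (FreeMonoid.ofList l₁) = s → l₁.length = N →
    wordPerm n (FreeMonoid.ofList l₂) = s → l₂.length = N →
    mkw l₁ = mkw l₂ := by
  intro N
  induction N using Nat.strong_induction_on with
  | _ N IH =>
  intro s l₁ l₂ hcs h1 h1l h2 h2l
  rcases l₁ with _ | ⟨i, t₁⟩
  · rcases l₂ with _ | ⟨j, t₂⟩
    · rfl
    · simp at h1l h2l; omega
  rcases l₂ with _ | ⟨j, t₂⟩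
  · simp at h1l h2l; omega
  have hN : 0 < N := by simp at h1l; omega
  -- the "same head" step
  have head : ∀ (k : Fin (n-1)) (u v : List (Fin (n-1))),
      wordPerm n (FreeMonoid.ofList (k::u)) = s → (k::u).length = N →
      wordPerm n (FreeMonoid.ofList (k::v)) = s → (k::v).length = N →
      mkw (k::u) = mkw (k::v) := by
    intro k u v hu hul hv hvl
    rw [wp_cons] at hu hv
    have hu' : wordPerm n (FreeMonoid.ofList u) = simpleT n k * s := by
      rw [← hu, ← mul_assoc, simpleT_mul_self, one_mul]
    have hv' : wordPerm n (FreeMonoid.ofList v) = simpleT n k * s := by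
      rw [← hv, ← mul_assoc, simpleT_mul_self, one_mul]
    have hul' : u.length = N - 1 := by simp at hul; omega
    have hvl' : v.length = N - 1 := by simp at hvl; omega
    have hcle : cinv (simpleT n k * s) ≤ N - 1 := by
      rw [← hu']; rw [← hul']; exact cinv_wp_le u
    have hcge : cinv s ≤ cinv (simpleT n k * s) + 1 := by
      have := (cinv_simpleT_mul_le' (simpleT n k * s) k).1
      rwa [← mul_assoc, simpleT_mul_self, one_mul] at this
    have hceq : cinv (simpleT n k * s) = N - 1 := by omega
    have := IH (N-1) (by omega) (simpleT n k * s) u v hceq hu' hul' hv' hvl'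
    rw [mkw_cons, mkw_cons, this]
  by_cases hij : i = j
  · subst hij
    exact head i t₁ t₂ h1 h1l h2 h2l
  -- distinct heads: both are left descents
  have hdesc : ∀ (k : Fin (n-1)) (u : List (Fin (n-1))),
      wordPerm n (FreeMonoid.ofList (k::u)) = s → (k::u).length = N →
      s⁻¹ (hi k) < s⁻¹ (lo k) := by
    intro k u hu hul
    rw [wp_cons] at hu
    have hu' : wordPerm n (FreeMonoid.ofList u) = simpleT n k * s := by
      rw [← hu, ← mul_assoc, simpleT_mul_self, one_mul]
    have : cinv (simpleT n k * s) < N := by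
      have h' := cinv_wp_le u
      rw [hu'] at h'
      simp at hul; omega
    exact ldesc_iff (by omega)
  have hdi := hdesc i t₁ h1 h1l
  have hdj := hdesc j t₂ h2 h2l
  have hvij : (i:ℕ) ≠ (j:ℕ) := fun h => hij (Fin.ext h)
  have hcases : ((i:ℕ)+1 < j ∨ (j:ℕ)+1 < i) ∨ (j:ℕ) = (i:ℕ)+1 ∨ (i:ℕ) = (j:ℕ)+1 := by omega
  rcases hcases with hcomm | hadj
  · -- commuting case
    obtain ⟨t, hts, htc⟩ := factor_comm hcomm hdi hdj
    obtain ⟨u, hu1, hu2⟩ := exists_word t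
    have hc₁ : wordPerm n (FreeMonoid.ofList (i::j::u)) = s := by
      rw [wp_cons, wp_cons, hu1, ← hts]
    have hc₂ : wordPerm n (FreeMonoid.ofList (j::i::u)) = s := by
      rw [wp_cons, wp_cons, hu1, ← mul_assoc, ← perm_comm hcomm, mul_assoc, ← hts]
    have hlen : (i::j::u).length = N := by simp [hu2]; omega
    have hlen2 : (j::i::u).length = N := by simp [hu2]; omega
    calc mkw (i::t₁) = mkw (i::j::u) := head i t₁ (j::u) h1 h1l hc₁ hlen
      _ = mkw (j::i::u) := braid_step_comm hcomm u
      _ = mkw (j::t₂) := (head j t₂ (i::u) h2 h2l hc₂ hlen2).symm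
  · -- adjacent case
    have hperm : simpleT n i * simpleT n j * simpleT n i
        = simpleT n j * simpleT n i * simpleT n j := by
      rcases hadj with h | h
      · exact perm_braid h
      · exact (perm_braid h).symm
    obtain ⟨t, hts, htc⟩ : ∃ t, s = simpleT n i * (simpleT n j * (simpleT n i * t))
        ∧ cinv t + 3 = cinv s := by
      rcases hadj with h | h
      · exact factor_adj h hdi hdj
      · obtain ⟨t, hts, htc⟩ := factor_adj h hdj hdi
        refine ⟨t, ?_, htc⟩
        rw [hts]
        simp only [← mul_assoc]
        rw [hperm]
    obtain ⟨u, hu1, hu2⟩ := exists_word t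
    have hc₁ : wordPerm n (FreeMonoid.ofList (i::j::i::u)) = s := by
      rw [wp_cons, wp_cons, wp_cons, hu1, ← hts]
    have hc₂ : wordPerm n (FreeMonoid.ofList (j::i::j::u)) = s := by
      rw [wp_cons, wp_cons, wp_cons, hu1]
      simp only [← mul_assoc]
      rw [← hperm]
      simp only [mul_assoc]
      rw [← hts]
    have hlen : (i::j::i::u).length = N := by simp [hu2]; omega
    have hlen2 : (j::i::j::u).length = N := by simp [hu2]; omega
    calc mkw (i::t₁) = mkw (i::j::i::u) := head i t₁ (j::i::u) h1 h1l hc₁ hlen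
      _ = mkw (j::i::j::u) := braid_step_adj hadj u
      _ = mkw (j::t₂) := (head j t₂ (i::j::u) h2 h2l hc₂ hlen2).symm

end Mats


/-- Matsumoto's theorem: the Matsumoto–Tits section is well defined:
any two reduced words of `s ∈ S_n` have the same image in the positive braid
monoid `B_n⁺`. -/
theorem matsumoto_tits_well_defined (n : ℕ) (s : Equiv.Perm (Fin n))
    (w₁ w₂ : FreeMonoid (Fin (n - 1)))
    (hw₁ : wordPerm n w₁ = s) (hl₁ : w₁.length = permLength s)
    (hw₂ : wordPerm n w₂ = s) (hl₂ : w₂.length = permLength s) :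
    (braidCon n).mk' w₁ = (braidCon n).mk' w₂ := by
  have hp := Mats.permLength_eq_cinv s
  rw [hp] at hl₁ hl₂
  exact Mats.main_lists (Mats.cinv s) s (FreeMonoid.toList w₁) (FreeMonoid.toList w₂)
    rfl hw₁ hl₁ hw₂ hl₂
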